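/- Let ρ: l → r ⇐ s_1 ↠ t_1; …; s_k ↠ t_k be an extended deterministic conditional rewrite rule. Then: (1) ρ is ultra-left-linear w.r.t. Ohlebusch's unraveling U if and only if all of l, t_1, …, t_k are linear and Var(t_i) ∩ X_i = ∅ for all 1 ≤ i ≤ k; (2) ρ is ultra-right-linear w.r.t. U if and only if r is linear and all of s_1, …, s_k are ground; (3) ρ is ultra-non-erasing w.r.t. U if and only if Var(l, t_1, …, t_k) ⊆ Var(r). -/

import Mathlib

set_option maxHeartbeats 1000000

universe u

/-! ## Terms -/

inductive Term (α : Type u) : Type u where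
  | var : ℕ → Term α
  | app : α → List (Term α) → Term α

namespace Term

variable {α : Type u}

/-- The list of variable occurrences of a term (left-to-right). -/
def varList : Term α → List ℕ
  | var x => [x]
  | app _ ts => ts.attach.foldr (fun t acc => varList t.1 ++ acc) []
decreasing_by
  simp only [Term.app.sizeOf_spec]
  have := List.sizeOf_lt_of_mem t.2
  omega

/-- The list of (function symbol, number of arguments) occurrences of a term. -/
def apps : Term α → List (α × ℕ)
  | var _ => []
  | app f ts => (f, ts.length) :: ts.attach.foldr (fun t acc => apps t.1 ++ acc) []
decreasing_by
  simp only [Term.app.sizeOf_spec]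
  have := List.sizeOf_lt_of_mem t.2
  omega

/-- `Var(t)`: the set of variables of a term. -/
def varFinset (t : Term α) : Finset ℕ := t.varList.toFinset

/-- All function symbols of the term belong to the signature `F`. -/
def overSig (F : Set α) (t : Term α) : Prop := ∀ p ∈ t.apps, p.1 ∈ F

/-- `t ∈ T(F,V)`: all function symbols belong to `F` and are applied
according to their arities. -/
def inT (F : Set α) (ar : α → ℕ) (t : Term α) : Prop :=
  ∀ p ∈ t.apps, p.1 ∈ F ∧ ar p.1 = p.2

/-- A term is linear if no variable occurs twice in it. -/
def Linear (t : Term α) : Prop := t.varList.Nodup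

/-- A term is ground if it contains no variable. -/
def Ground (t : Term α) : Prop := t.varList = []

/-- Applying a substitution to a term. -/
def subst (σ : ℕ → Term α) : Term α → Term α
  | var x => σ x
  | app f ts => app f (ts.attach.map (fun t => subst σ t.1))
decreasing_by
  simp only [Term.app.sizeOf_spec]
  have := List.sizeOf_lt_of_mem t.2
  omega

def isVar : Term α → Prop
  | var _ => True
  | app _ _ => False

def root? : Term α → Option α
  | var _ => none
  | app f _ => some f

def args : Term α → List (Term α)
  | var _ => []
  | app _ ts => ts

end Term

def junkPair {α : Type u} : Term α × Term α := (Term.var 0, Term.var 0)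

/-! ## Conditional rewrite rules -/

/-- An extended (oriented) conditional rewrite rule `l → r ⇐ s₁ ↠ t₁; …; s_k ↠ t_k`,
where `conds` is the list of pairs `(sᵢ, tᵢ)`. -/
structure ERule (α : Type u) : Type u where
  lhs : Term α
  rhs : Term α
  conds : List (Term α × Term α)

namespace ERule

variable {α : Type u}

def nonLV (ρ : ERule α) : Prop := ¬ ρ.lhs.isVar
def nonRV (ρ : ERule α) : Prop := ¬ ρ.rhs.isVar

/-- `X_{j+1} = Var(l, t_1, …, t_j)` (0-based index `j`). -/
def Xset (ρ : ERule α) (j : ℕ) : Finset ℕ :=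
  ρ.lhs.varFinset ∪ ((ρ.conds.take j).map (fun c => c.2.varFinset)).foldr (· ∪ ·) ∅

/-- `Y_{j+1} = Var(r, t_{j+1}, s_{j+2}, t_{j+2}, …, s_k, t_k)` (0-based index `j`). -/
def Yset (ρ : ERule α) (j : ℕ) : Finset ℕ :=
  ρ.rhs.varFinset ∪ (ρ.conds.getD j junkPair).2.varFinset ∪
    ((ρ.conds.drop (j+1)).map (fun c => c.1.varFinset ∪ c.2.varFinset)).foldr (· ∪ ·) ∅

/-- `Z_i = X_i ∩ Y_i`. -/
def Zset (ρ : ERule α) (j : ℕ) : Finset ℕ := ρ.Xset j ∩ ρ.Yset j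

/-- Determinism: `Var(sᵢ) ⊆ Var(l, t₁, …, t_{i-1})`. -/
def Det (ρ : ERule α) : Prop :=
  ∀ j < ρ.conds.length, (ρ.conds.getD j junkPair).1.varFinset ⊆ ρ.Xset j

/-- Type 3: `Var(r) ⊆ Var(l, s₁, t₁, …, s_k, t_k)`. -/
def Type3 (ρ : ERule α) : Prop :=
  ρ.rhs.varFinset ⊆
    ρ.lhs.varFinset ∪ ((ρ.conds.map (fun c => c.1.varFinset ∪ c.2.varFinset)).foldr (· ∪ ·) ∅)

/-- Left-linearity of a rule. -/
def LL (ρ : ERule α) : Prop := ρ.lhs.Linear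
/-- Right-linearity of a rule. -/
def RL (ρ : ERule α) : Prop := ρ.rhs.Linear
/-- Non-erasingness of a rule: `Var(l) ⊆ Var(r)`. -/
def NE (ρ : ERule α) : Prop := ρ.lhs.varFinset ⊆ ρ.rhs.varFinset

/-- `EVar(l → r) = Var(r) \\ Var(l)`, the extra variables of a rule. -/
def extraVars (ρ : ERule α) : Finset ℕ := ρ.rhs.varFinset \ ρ.lhs.varFinset

/-- The inverted rule `(l → r ⇐ s₁ ↠ t₁; …; s_k ↠ t_k)⁻¹ = r → l ⇐ t_k ↠ s_k; …; t₁ ↠ s₁`. -/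
def inv (ρ : ERule α) : ERule α :=
  ⟨ρ.rhs, ρ.lhs, (ρ.conds.map (fun c => (c.2, c.1))).reverse⟩

def allVarFinset (ρ : ERule α) : Finset ℕ :=
  ρ.lhs.varFinset ∪ ρ.rhs.varFinset ∪
    ((ρ.conds.map (fun c => c.1.varFinset ∪ c.2.varFinset)).foldr (· ∪ ·) ∅)

/-- A number strictly larger than every variable of the rule; used to pick fresh variables. -/
def freshBase (ρ : ERule α) : ℕ := ρ.allVarFinset.sup id + 1

/-- All terms of the rule use only symbols of `F`. -/
def overSig (F : Set α) (ρ : ERule α) : Prop :=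
  ρ.lhs.overSig F ∧ ρ.rhs.overSig F ∧ ∀ c ∈ ρ.conds, c.1.overSig F ∧ c.2.overSig F

/-- All terms of the rule are in `T(F,V)` (symbols of `F`, arity-correct). -/
def inT (F : Set α) (ar : α → ℕ) (ρ : ERule α) : Prop :=
  ρ.lhs.inT F ar ∧ ρ.rhs.inT F ar ∧ ∀ c ∈ ρ.conds, c.1.inT F ar ∧ c.2.inT F ar

end ERule

/-! ## Reduction relations -/

/-- One-hole contexts. -/
inductive Ctx (α : Type u) : Type u where
  | hole : Ctx α
  | app : α → List (Term α) → Ctx α → List (Term α) → Ctx α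

def Ctx.plug {α : Type u} : Ctx α → Term α → Term α
  | .hole, t => t
  | .app f pre c post, t => .app f (pre ++ c.plug t :: post)

/-- The approximations `→_{(n),R}` of the reduction relation of an oriented eCTRS. -/
def RedN {α : Type u} (R : Set (ERule α)) : ℕ → Term α → Term α → Prop
  | 0 => fun _ _ => False
  | n + 1 => fun s t =>
      RedN R n s t ∨
      ∃ ρ ∈ R, ∃ C : Ctx α, ∃ σ : ℕ → Term α,
        s = C.plug (ρ.lhs.subst σ) ∧ t = C.plug (ρ.rhs.subst σ) ∧
        ∀ c ∈ ρ.conds, Relation.ReflTransGen (RedN R n) (c.1.subst σ) (c.2.subst σ)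

/-- The reduction relation `→_R` of an oriented eCTRS. -/
def Red {α : Type u} (R : Set (ERule α)) (s t : Term α) : Prop := ∃ n, RedN R n s t

/-- `→*_R`. -/
def RedStar {α : Type u} (R : Set (ERule α)) : Term α → Term α → Prop :=
  Relation.ReflTransGen (Red R)

/-- The approximations of the reduction relation of a join CTRS
(conditions interpreted as joinability). -/
def JRedN {α : Type u} (R : Set (ERule α)) : ℕ → Term α → Term α → Prop
  | 0 => fun _ _ => False
  | n + 1 => fun s t =>
      JRedN R n s t ∨
      ∃ ρ ∈ R, ∃ C : Ctx α, ∃ σ : ℕ → Term α,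
        s = C.plug (ρ.lhs.subst σ) ∧ t = C.plug (ρ.rhs.subst σ) ∧
        ∀ c ∈ ρ.conds, ∃ w, Relation.ReflTransGen (JRedN R n) (c.1.subst σ) w ∧
          Relation.ReflTransGen (JRedN R n) (c.2.subst σ) w

/-- The reduction relation of a join CTRS. -/
def JRed {α : Type u} (R : Set (ERule α)) (s t : Term α) : Prop := ∃ n, JRedN R n s t

def JRedStar {α : Type u} (R : Set (ERule α)) : Term α → Term α → Prop :=
  Relation.ReflTransGen (JRed R)

/-- The underlying unconditional system `R_u`. -/
def Ru {α : Type u} (R : Set (ERule α)) : Set (ERule α) :=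
  (fun ρ : ERule α => ⟨ρ.lhs, ρ.rhs, []⟩) '' R

/-- Normal form w.r.t. a system. -/
def IsNF {α : Type u} (R : Set (ERule α)) (t : Term α) : Prop := ∀ w, ¬ Red R t w

/-! ## Unravelings for deterministic CTRSs -/

/-- The fixed-order sequence of a finite set of variables. -/
def seqOf (s : Finset ℕ) : List ℕ := s.sort (· ≤ ·)

/-- `U(t, x⃗)`: a U symbol applied to a term followed by a sequence of variables. -/
def mkU {α : Type u} (f : α) (t : Term α) (xs : List ℕ) : Term α :=
  .app f (t :: xs.map Term.var)

/-- Generic sequential unraveling of a single deterministic rule, where `carry j` is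
the variable sequence carried by the `j`-th U symbol. -/
def unravelWith {α : Type u} (carry : ℕ → List ℕ) (u : ℕ → α) (ρ : ERule α) :
    List (ERule α) :=
  (List.range (ρ.conds.length + 1)).map (fun j =>
    ⟨ if j = 0 then ρ.lhs else mkU (u (j-1)) (ρ.conds.getD (j-1) junkPair).2 (carry (j-1)),
      if j < ρ.conds.length then mkU (u j) (ρ.conds.getD j junkPair).1 (carry j) else ρ.rhs,
      [] ⟩)

/-- Ohlebusch's unraveling `U` of a single rule (carrying `X⃗ᵢ`). -/
def unravelU {α : Type u} (u : ℕ → α) (ρ : ERule α) : List (ERule α) :=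
  unravelWith (fun j => seqOf (ρ.Xset j)) u ρ

/-- The optimized unraveling `U_opt` of a single rule (carrying `Z⃗ᵢ`). -/
def unravelOpt {α : Type u} (u : ℕ → α) (ρ : ERule α) : List (ERule α) :=
  unravelWith (fun j => seqOf (ρ.Zset j)) u ρ

/-- `U(R)`. -/
def USys {α : Type u} (u : ERule α → ℕ → α) (R : Set (ERule α)) : Set (ERule α) :=
  { q | ∃ ρ ∈ R, q ∈ unravelU (u ρ) ρ }

/-- `U_opt(R)`. -/
def UoptSys {α : Type u} (u : ERule α → ℕ → α) (R : Set (ERule α)) : Set (ERule α) :=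
  { q | ∃ ρ ∈ R, q ∈ unravelOpt (u ρ) ρ }

/-- The U symbols introduced for the rules of `R`. -/
def USymbols {α : Type u} (u : ERule α → ℕ → α) (R : Set (ERule α)) : Set α :=
  { a | ∃ ρ ∈ R, ∃ i < ρ.conds.length, a = u ρ i }

/-- Freshness of the U symbols: they do not occur in `F` and are pairwise distinct. -/
def UFresh {α : Type u} (F : Set α) (u : ERule α → ℕ → α) (R : Set (ERule α)) : Prop :=
  (∀ ρ ∈ R, ∀ i < ρ.conds.length, u ρ i ∉ F) ∧
  (∀ ρ ∈ R, ∀ ρ' ∈ R, ∀ i < ρ.conds.length, ∀ j < ρ'.conds.length,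
      u ρ i = u ρ' j → ρ = ρ' ∧ i = j)

/-! ## Positions, parallel reduction, EV-safe reduction -/

abbrev Pos := List ℕ

/-- Subterm at a position. -/
def Term.sub? {α : Type u} : Pos → Term α → Option (Term α)
  | [], t => some t
  | _ :: _, .var _ => none
  | i :: p, .app _ ts => (ts[i]?).bind (Term.sub? p)

/-- Replacing the subterm at a position by `w`. -/
def Term.replaceAt {α : Type u} (w : Term α) : Pos → Term α → Term α
  | [], _ => w
  | _ :: _, .var x => .var x
  | i :: p, .app f ts =>
      .app f (ts.mapIdx (fun j s => if j = i then Term.replaceAt w p s else s))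

/-- `Pos_F(t)`: non-variable positions of `t`. -/
def PosF {α : Type u} (t : Term α) : Set Pos :=
  { p | ∃ f ts, Term.sub? p t = some (Term.app f ts) }

/-- `Pos_V(t)`: variable positions of `t`. -/
def PosV {α : Type u} (t : Term α) : Set Pos :=
  { p | ∃ x, Term.sub? p t = some (Term.var x) }

/-- One rewrite step of an eTRS at position `p`. -/
def RedAt {α : Type u} (R : Set (ERule α)) (p : Pos) (s t : Term α) : Prop :=
  ∃ ρ ∈ R, ρ.conds = [] ∧ ∃ σ : ℕ → Term α,
    Term.sub? p s = some (ρ.lhs.subst σ) ∧ t = Term.replaceAt (ρ.rhs.subst σ) p s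

/-- Two positions are parallel. -/
def ParallelPos (p q : Pos) : Prop := ¬ p <+: q ∧ ¬ q <+: p

/-- A sequence of single steps at the listed positions. -/
inductive RedSeqAt {α : Type u} (R : Set (ERule α)) : List Pos → Term α → Term α → Prop
  | nil (t : Term α) : RedSeqAt R [] t t
  | cons {ps s s' t} (p : Pos) : RedAt R p s s' → RedSeqAt R ps s' t →
      RedSeqAt R (p :: ps) s t

/-- One parallel rewrite step contracting the (pairwise parallel) positions in `P`. -/
def ParStep {α : Type u} (R : Set (ERule α)) (P : List Pos) (s t : Term α) : Prop :=
  P.Pairwise ParallelPos ∧ RedSeqAt R P s t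

/-- The parallel reduction `⇉_R`. -/
def ParRed {α : Type u} (R : Set (ERule α)) (s t : Term α) : Prop :=
  ∃ P, ParStep R P s t

/-- Parallel reduction where every contracted position is at or below a position of `Q`. -/
def ParRedBelow {α : Type u} (R : Set (ERule α)) (Q : Set Pos) (s t : Term α) : Prop :=
  ∃ P, ParStep R P s t ∧ ∀ p ∈ P, ∃ q ∈ Q, q <+: p

/-- `n`-fold composition of a relation. -/
def NFold {β : Type*} (r : β → β → Prop) : ℕ → β → β → Prop
  | 0 => Eq
  | n + 1 => fun a c => ∃ b, r a b ∧ NFold r n b c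

/-- The update of the set of basic positions w.r.t. extra variables after a rewrite step
at position `p` with rule `l → r`. -/
def nextB {α : Type u} (B : Set Pos) (p : Pos) (l r : Term α) : Set Pos :=
  { q | q ∈ B ∧ ¬ p <+: q }
  ∪ { q | ∃ q' ∈ PosF r, q = p ++ q' }
  ∪ { q | ∃ pv p' q', pv ∈ PosV l ∧ Term.sub? pv l = Term.sub? p' r ∧
        (p ++ pv ++ q') ∈ B ∧ q = p ++ p' ++ q' }

/-- Reduction sequences of an eTRS based on a set `B` of positions w.r.t. extra
variables, where additionally every term substituted for an extra variable of the
applied rule satisfies `T` (EV-instantiation on `T`). -/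
inductive EVSeq {α : Type u} (R : Set (ERule α)) (T : Term α → Prop) :
    Set Pos → Term α → Term α → Prop
  | refl (B : Set Pos) (t : Term α) : EVSeq R T B t t
  | step {B : Set Pos} {s s' t : Term α} (p : Pos) (ρ : ERule α) (σ : ℕ → Term α) :
      ρ ∈ R → ρ.conds = [] →
      Term.sub? p s = some (ρ.lhs.subst σ) →
      s' = Term.replaceAt (ρ.rhs.subst σ) p s →
      p ∈ B →
      (∀ x ∈ ρ.extraVars, T (σ x)) →
      EVSeq R T (nextB B p ρ.lhs ρ.rhs) s' t →
      EVSeq R T B s t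

/-- An EV-safe reduction sequence `s ↪*_R t`, EV-instantiated on `T`. -/
def EVSafeI {α : Type u} (R : Set (ERule α)) (T : Term α → Prop) (s t : Term α) : Prop :=
  EVSeq R T (PosF s) s t

/-- An EV-safe reduction sequence `s ↪*_R t`. -/
def EVSafe {α : Type u} (R : Set (ERule α)) (s t : Term α) : Prop :=
  EVSeq R (fun _ => True) (PosF s) s t

/-! ## Tree homomorphisms -/

/-- Applying the tree homomorphism determined by `h` to a term:
`φ(f(t₁, …, t_n)) = h(f){xᵢ ↦ φ(tᵢ)}` (the formal variable `xᵢ` is the variable `i - 1`). -/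
def applyHom {α : Type u} (h : α → Term α) : Term α → Term α
  | .var x => .var x
  | .app f ts =>
      Term.subst (fun i => (ts.attach.map (fun s => applyHom h s.1)).getD i (Term.var i)) (h f)
decreasing_by
  simp only [Term.app.sizeOf_spec]
  have := List.sizeOf_lt_of_mem s.2
  omega

/-- The image of a rule under a tree homomorphism. -/
def homRule {α : Type u} (h : α → Term α) (ρ : ERule α) : ERule α :=
  ⟨applyHom h ρ.lhs, applyHom h ρ.rhs,
    ρ.conds.map (fun c => (applyHom h c.1, applyHom h c.2))⟩

/-- The image of an eCTRS under a tree homomorphism. -/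
def homSys {α : Type u} (h : α → Term α) (R : Set (ERule α)) : Set (ERule α) :=
  homRule h '' R

/-- `h` determines a tree homomorphism from `T(G₁,V)` to `T(G₂,V)` (w.r.t. arity `ar`):
for `f ∈ G₁` of arity `n`, `h f` is a term over `G₂` with variables among `x₁, …, x_n`. -/
def TreeHom {α : Type u} (ar : α → ℕ) (G₁ G₂ : Set α) (h : α → Term α) : Prop :=
  ∀ f ∈ G₁, (h f).overSig G₂ ∧ ∀ x ∈ (h f).varList, x < ar f

/-- `F`-identical tree homomorphism. -/
def FIdentical {α : Type u} (ar : α → ℕ) (F : Set α) (h : α → Term α) : Prop :=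
  ∀ f ∈ F, h f = Term.app f ((List.range (ar f)).map Term.var)

/-- Non-erasing tree homomorphism (on the signature `G`). -/
def HomNonErasing {α : Type u} (ar : α → ℕ) (G : Set α) (h : α → Term α) : Prop :=
  ∀ f ∈ G, (h f).varFinset = Finset.range (ar f)

/-- The homomorphism is EV-preserving for the eTRS `S`. -/
def EVPreserving {α : Type u} (h : α → Term α) (S : Set (ERule α)) : Prop :=
  ∀ ρ ∈ S, (homRule h ρ).extraVars = ρ.extraVars

/-! ## Unravelings for join and normal CTRSs, and `Norm` -/

/-- Marchiori-style unraveling `U_J` of a join conditional rule. -/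
def unravelJ {α : Type u} (uj : ERule α → α) (ρ : ERule α) : List (ERule α) :=
  if ρ.conds.isEmpty then [ρ]
  else
    [ ⟨ρ.lhs,
        Term.app (uj ρ) ((ρ.conds.foldr (fun c acc => c.1 :: c.2 :: acc) []) ++
          (seqOf ρ.lhs.varFinset).map Term.var), []⟩,
      ⟨Term.app (uj ρ)
          (((List.range ρ.conds.length).foldr
              (fun j acc => Term.var (ρ.freshBase + j) :: Term.var (ρ.freshBase + j) :: acc) []) ++
            (seqOf ρ.lhs.varFinset).map Term.var),
        ρ.rhs, []⟩ ]

def UJSys {α : Type u} (uj : ERule α → α) (R : Set (ERule α)) : Set (ERule α) :=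
  { q | ∃ ρ ∈ R, q ∈ unravelJ uj ρ }

/-- Unraveling `U_N` of a normal conditional rule. -/
def unravelN {α : Type u} (un : ERule α → α) (ρ : ERule α) : List (ERule α) :=
  if ρ.conds.isEmpty then [ρ]
  else
    [ ⟨ρ.lhs,
        Term.app (un ρ) (ρ.conds.map Prod.fst ++ (seqOf ρ.lhs.varFinset).map Term.var), []⟩,
      ⟨Term.app (un ρ) (ρ.conds.map Prod.snd ++ (seqOf ρ.lhs.varFinset).map Term.var),
        ρ.rhs, []⟩ ]

def UNSys {α : Type u} (un : ERule α → α) (R : Set (ERule α)) : Set (ERule α) :=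
  { q | ∃ ρ ∈ R, q ∈ unravelN un ρ }

/-- `Norm` on rules: `l → r ⇐ eq(s₁,t₁) ↠ eq(⊤,⊤); …; eq(s_k,t_k) ↠ eq(⊤,⊤)`. -/
def normRule {α : Type u} (eqS topS : α) (ρ : ERule α) : ERule α :=
  ⟨ρ.lhs, ρ.rhs,
    ρ.conds.map (fun c =>
      (Term.app eqS [c.1, c.2], Term.app eqS [Term.app topS [], Term.app topS []]))⟩

/-- `Norm(R) = {eq(x,x) → eq(⊤,⊤)} ∪ {Norm(ρ) | ρ ∈ R}`. -/
def NormSys {α : Type u} (eqS topS : α) (R : Set (ERule α)) : Set (ERule α) :=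
  insert
    ⟨Term.app eqS [Term.var 0, Term.var 0],
      Term.app eqS [Term.app topS [], Term.app topS []], []⟩
    (normRule eqS topS '' R)

/-- A normal CTRS: a deterministic, non-LV CTRS all of whose condition right-hand
sides are ground normal forms w.r.t. `R_u`. -/
def NormalCTRS {α : Type u} (R : Set (ERule α)) : Prop :=
  ∀ ρ ∈ R, ρ.Det ∧ ρ.nonLV ∧ ∀ c ∈ ρ.conds, c.2.Ground ∧ IsNF (Ru R) c.2

section Helpers
variable {α : Type u}

theorem varList_var (x : ℕ) : (Term.var (α := α) x).varList = [x] := by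
  rw [Term.varList]

theorem varList_app (f : α) (ts : List (Term α)) :
    (Term.app f ts).varList = ts.foldr (fun t acc => t.varList ++ acc) [] := by
  rw [Term.varList]
  exact List.foldr_attach (l := ts) (f := fun t acc => t.varList ++ acc) (b := [])

theorem varList_mkU (f : α) (t : Term α) (xs : List ℕ) :
    (mkU f t xs).varList = t.varList ++ xs := by
  rw [mkU, varList_app, List.foldr_cons, List.foldr_map]
  congr 1
  induction xs with
  | nil => rfl
  | cons a l ih => simp [varList_var, ih]

theorem varFinset_mkU (f : α) (t : Term α) (xs : List ℕ) :
    (mkU f t xs).varFinset = t.varFinset ∪ xs.toFinset := by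
  simp [Term.varFinset, varList_mkU]

theorem mem_foldr_union {x : ℕ} : ∀ (L : List (Finset ℕ)),
    x ∈ L.foldr (· ∪ ·) ∅ ↔ ∃ s ∈ L, x ∈ s
  | [] => by simp
  | a :: L => by simp [mem_foldr_union L]

theorem foldr_union_append (A B : List (Finset ℕ)) :
    (A ++ B).foldr (· ∪ ·) ∅ = A.foldr (· ∪ ·) ∅ ∪ B.foldr (· ∪ ·) ∅ := by
  induction A with
  | nil => simp
  | cons a l ih => simp [ih, Finset.union_assoc]

theorem Xset_zero (ρ : ERule α) : ρ.Xset 0 = ρ.lhs.varFinset := by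
  simp [ERule.Xset]

theorem Xset_succ (ρ : ERule α) {j : ℕ} (hj : j < ρ.conds.length) :
    ρ.Xset (j+1) = ρ.Xset j ∪ (ρ.conds.getD j junkPair).2.varFinset := by
  have h1 : ρ.conds.take (j+1) = ρ.conds.take j ++ [ρ.conds.getD j junkPair] := by
    rw [List.take_succ, List.getElem?_eq_getElem hj, List.getD_eq_getElem ρ.conds junkPair hj]
    rfl
  rw [ERule.Xset, ERule.Xset, h1, List.map_append, foldr_union_append]
  simp [Finset.union_assoc]

theorem Xset_subset (ρ : ERule α) (j : ℕ) : ρ.Xset j ⊆ ρ.Xset ρ.conds.length := by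
  intro x hx
  simp only [ERule.Xset, Finset.mem_union, mem_foldr_union, List.mem_map, List.take_length] at hx ⊢
  rcases hx with h | ⟨s, ⟨c, hc, rfl⟩, hx⟩
  · exact Or.inl h
  · exact Or.inr ⟨_, ⟨c, List.mem_of_mem_take hc, rfl⟩, hx⟩

theorem Xset_length (ρ : ERule α) :
    ρ.Xset ρ.conds.length =
      ρ.lhs.varFinset ∪ ((ρ.conds.map (fun c => c.2.varFinset)).foldr (· ∪ ·) ∅) := by
  simp [ERule.Xset, List.take_length]

theorem linear_mkU_iff (f : α) (t : Term α) (s : Finset ℕ) :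
    (mkU f t (seqOf s)).Linear ↔ t.Linear ∧ Disjoint t.varFinset s := by
  rw [Term.Linear, varList_mkU, List.nodup_append]
  constructor
  · rintro ⟨h1, _, h3⟩
    refine ⟨h1, ?_⟩
    rw [← Finset.sort_toFinset (s := s) (r := (· ≤ ·))]
    exact List.disjoint_toFinset_iff_disjoint.mpr (by intro a ha hb; exact h3 a ha a hb rfl)
  · rintro ⟨h1, h2⟩
    refine ⟨h1, Finset.sort_nodup _ _, ?_⟩
    rw [← Finset.sort_toFinset (s := s) (r := (· ≤ ·))] at h2
    exact fun a ha b hb hab => by subst hab; exact List.disjoint_toFinset_iff_disjoint.mp h2 ha hb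

theorem ground_iff_varFinset (t : Term α) : t.Ground ↔ t.varFinset = ∅ := by
  rw [Term.Ground, Term.varFinset, List.toFinset_eq_empty_iff]

end Helpers

/-- For an extended deterministic conditional rewrite rule
`ρ : l → r ⇐ s₁ ↠ t₁; …; s_k ↠ t_k`:
(1) `ρ` is ultra-left-linear w.r.t. Ohlebusch's unraveling `U` iff all of
`l, t₁, …, t_k` are linear and `Var(tᵢ) ∩ Xᵢ = ∅` for all `i`;
(2) `ρ` is ultra-right-linear w.r.t. `U` iff `r` is linear and all `sᵢ` are ground;
(3) `ρ` is ultra-non-erasing w.r.t. `U` iff `Var(l, t₁, …, t_k) ⊆ Var(r)`. -/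
theorem u_ultra_props_iff {α : Type u} (u : ℕ → α) (ρ : ERule α) (hdet : ρ.Det) :
    ((∀ q ∈ unravelU u ρ, q.LL) ↔
      (ρ.lhs.Linear ∧ (∀ c ∈ ρ.conds, c.2.Linear) ∧
        ∀ j < ρ.conds.length,
          Disjoint (ρ.conds.getD j junkPair).2.varFinset (ρ.Xset j))) ∧
    ((∀ q ∈ unravelU u ρ, q.RL) ↔
      (ρ.rhs.Linear ∧ ∀ c ∈ ρ.conds, c.1.Ground)) ∧
    ((∀ q ∈ unravelU u ρ, q.NE) ↔
      ρ.lhs.varFinset ∪ ((ρ.conds.map (fun c => c.2.varFinset)).foldr (· ∪ ·) ∅) ⊆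
        ρ.rhs.varFinset) := by
  have hmem : ∀ j < ρ.conds.length + 1,
      (⟨if j = 0 then ρ.lhs
          else mkU (u (j-1)) (ρ.conds.getD (j-1) junkPair).2 (seqOf (ρ.Xset (j-1))),
        if j < ρ.conds.length then mkU (u j) (ρ.conds.getD j junkPair).1 (seqOf (ρ.Xset j))
          else ρ.rhs,
        []⟩ : ERule α) ∈ unravelU u ρ := by
    intro j hj
    simp only [unravelU, unravelWith, List.mem_map, List.mem_range]
    exact ⟨j, hj, rfl⟩
  have hdec : ∀ q ∈ unravelU u ρ, ∃ j, j < ρ.conds.length + 1 ∧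
      q = (⟨if j = 0 then ρ.lhs
              else mkU (u (j-1)) (ρ.conds.getD (j-1) junkPair).2 (seqOf (ρ.Xset (j-1))),
            if j < ρ.conds.length then mkU (u j) (ρ.conds.getD j junkPair).1 (seqOf (ρ.Xset j))
              else ρ.rhs,
            []⟩ : ERule α) := by
    intro q hq
    simp only [unravelU, unravelWith, List.mem_map, List.mem_range] at hq
    obtain ⟨j, hj, rfl⟩ := hq
    exact ⟨j, hj, rfl⟩
  have hgetDmem : ∀ j < ρ.conds.length, ρ.conds.getD j junkPair ∈ ρ.conds := by
    intro j hj
    rw [List.getD_eq_getElem ρ.conds junkPair hj]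
    exact List.getElem_mem hj
  refine ⟨⟨?_, ?_⟩, ⟨?_, ?_⟩, ⟨?_, ?_⟩⟩
  · -- LL forward
    intro h
    have hrule : ∀ j < ρ.conds.length,
        (ρ.conds.getD j junkPair).2.Linear ∧
          Disjoint (ρ.conds.getD j junkPair).2.varFinset (ρ.Xset j) := by
      intro j hj
      have h1 := h _ (hmem (j+1) (by omega))
      simp only [ERule.LL] at h1
      rw [if_neg (Nat.succ_ne_zero j)] at h1
      exact (linear_mkU_iff _ _ _).mp h1
    refine ⟨?_, ?_, fun j hj => (hrule j hj).2⟩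
    · have h1 := h _ (hmem 0 (by omega))
      simpa only [ERule.LL, if_pos rfl, ↓reduceIte] using h1
    · intro c hc
      obtain ⟨j, hj, rfl⟩ := List.mem_iff_getElem.mp hc
      have h1 := (hrule j hj).1
      rwa [List.getD_eq_getElem ρ.conds junkPair hj] at h1
  · -- LL backward
    rintro ⟨hl, ht, hd⟩ q hq
    obtain ⟨j, hj, rfl⟩ := hdec q hq
    match j, hj with
    | 0, _ => simpa only [ERule.LL, if_pos rfl, ↓reduceIte] using hl
    | j+1, hj =>
      have hj' : j < ρ.conds.length := by omega
      simp only [ERule.LL]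
      rw [if_neg (Nat.succ_ne_zero j)]
      exact (linear_mkU_iff _ _ _).mpr ⟨ht _ (hgetDmem j hj'), hd j hj'⟩
  · -- RL forward
    intro h
    have hrule : ∀ j < ρ.conds.length, (ρ.conds.getD j junkPair).1.Ground := by
      intro j hj
      have h1 := h _ (hmem j (by omega))
      simp only [ERule.RL] at h1
      rw [if_pos hj] at h1
      have h2 := ((linear_mkU_iff _ _ _).mp h1).2
      rw [ground_iff_varFinset]
      refine Finset.eq_empty_of_forall_notMem fun x hx => ?_
      exact (Finset.disjoint_left.mp h2 hx) (hdet j hj hx)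
    refine ⟨?_, ?_⟩
    · have h1 := h _ (hmem ρ.conds.length (by omega))
      simp only [ERule.RL] at h1
      rwa [if_neg (lt_irrefl _)] at h1
    · intro c hc
      obtain ⟨j, hj, rfl⟩ := List.mem_iff_getElem.mp hc
      have h1 := hrule j hj
      rwa [List.getD_eq_getElem ρ.conds junkPair hj] at h1
  · -- RL backward
    rintro ⟨hr, hs⟩ q hq
    obtain ⟨j, hj, rfl⟩ := hdec q hq
    simp only [ERule.RL]
    by_cases hjk : j < ρ.conds.length
    · rw [if_pos hjk]
      have hg : (ρ.conds.getD j junkPair).1.Ground := hs _ (hgetDmem j hjk)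
      refine (linear_mkU_iff _ _ _).mpr ⟨?_, ?_⟩
      · rw [Term.Linear, hg]
        exact List.nodup_nil
      · rw [(ground_iff_varFinset _).mp hg]
        exact Finset.disjoint_empty_left _
    · rw [if_neg hjk]
      exact hr
  · -- NE forward
    intro h
    have h1 := h _ (hmem ρ.conds.length (by omega))
    simp only [ERule.NE] at h1
    rw [if_neg (lt_irrefl _)] at h1
    rw [← Xset_length]
    rcases Nat.eq_zero_or_pos ρ.conds.length with hk | hk
    · rw [if_pos hk] at h1
      rw [hk, Xset_zero]
      exact h1
    · obtain ⟨m, hm⟩ : ∃ m, ρ.conds.length = m + 1 := ⟨ρ.conds.length - 1, by omega⟩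
      rw [if_neg (by omega)] at h1
      rw [varFinset_mkU] at h1
      have hm1 : ρ.conds.length - 1 = m := by omega
      rw [hm1] at h1
      have hseq : (seqOf (ρ.Xset m)).toFinset = ρ.Xset m := Finset.sort_toFinset _ _
      rw [hseq] at h1
      have hx : ρ.Xset ρ.conds.length =
          (ρ.conds.getD m junkPair).2.varFinset ∪ ρ.Xset m := by
        conv_lhs => rw [hm]
        rw [Xset_succ ρ (show m < ρ.conds.length by omega), Finset.union_comm]
      rw [hx]
      exact h1
  · -- NE backward
    intro h q hq
    have hXk : ρ.Xset ρ.conds.length ⊆ ρ.rhs.varFinset := by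
      rw [Xset_length]; exact h
    obtain ⟨j, hj, rfl⟩ := hdec q hq
    simp only [ERule.NE]
    have hseq : ∀ m, (seqOf (ρ.Xset m)).toFinset = ρ.Xset m :=
      fun m => Finset.sort_toFinset _ _
    match j, hj with
    | 0, _ =>
      rw [if_pos rfl]
      by_cases hk : 0 < ρ.conds.length
      · rw [if_pos hk, varFinset_mkU, hseq, Xset_zero]
        exact Finset.subset_union_right
      · rw [if_neg hk]
        intro x hx
        exact hXk (Xset_subset ρ 0 (by rwa [Xset_zero]))
    | j+1, hj =>
      have hj' : j < ρ.conds.length := by omega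
      rw [if_neg (Nat.succ_ne_zero j), varFinset_mkU, hseq]
      simp only [Nat.add_sub_cancel]
      have hlhs : (ρ.conds.getD j junkPair).2.varFinset ∪ ρ.Xset j
          = ρ.Xset (j+1) := by
        rw [Xset_succ ρ hj', Finset.union_comm]
      by_cases hjk : j+1 < ρ.conds.length
      · rw [if_pos hjk, varFinset_mkU, hseq, hlhs]
        exact Finset.subset_union_right
      · rw [if_neg hjk, hlhs]
        have : j + 1 = ρ.conds.length := by omega
        rw [this]
        exact hXk
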